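/- Let φ: ℂ → ℂ be a K-bi-Lipschitz map with K > 1 and φ(0) = 0. For ε ∈ [0,1], define Φ_ε: ℂ² → ℂ² by Φ_ε(z₁, z₂) = (z₁ − ε·φ(z₂), z₂). Then each Φ_ε is a bijection, and there exists a constant K₀ > 1, depending only on K, such that every Φ_ε is K₀-bi-Lipschitz. In particular one may take: ‖Φ_ε(p) − Φ_ε(q)‖ ≤ √(1 + 2K²)·‖p − q‖ and ‖Φ_ε(p) − Φ_ε(q)‖ ≥ min(1/K, 1/√K')·‖p − q‖ where K' = 1 + K⁴/(K−1)². -/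

import Mathlib

/-- The Euclidean norm on `ℂ² = ℂ × ℂ`: `‖(u,v)‖ = √(|u|² + |v|²)`. -/
noncomputable def eucNorm (p : ℂ × ℂ) : ℝ :=
  Real.sqrt (‖p.1‖ ^ 2 + ‖p.2‖ ^ 2)

lemma eucNorm_nonneg (p : ℂ × ℂ) : 0 ≤ eucNorm p := Real.sqrt_nonneg _

/-- The core real-arithmetic estimate. -/
lemma shear_real_bounds (K A B AD : ℝ) (hK : 1 < K)
    (hA0 : 0 ≤ A) (hB0 : 0 ≤ B) (hAD0 : 0 ≤ AD)
    (htr : AD ≤ A + K * B) (htr' : A - K * B ≤ AD) :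
    Real.sqrt (AD ^ 2 + B ^ 2) ≤ Real.sqrt (1 + 2 * K ^ 2) * Real.sqrt (A ^ 2 + B ^ 2) ∧
    min (1 / K) (1 / Real.sqrt (1 + K ^ 4 / (K - 1) ^ 2)) * Real.sqrt (A ^ 2 + B ^ 2) ≤
      Real.sqrt (AD ^ 2 + B ^ 2) := by
  have hK0 : (0:ℝ) < K := lt_trans one_pos hK
  have hKm1 : (0:ℝ) < K - 1 := by linarith
  have hK'0 : (0:ℝ) < 1 + K ^ 4 / (K - 1) ^ 2 := by positivity
  constructor
  · rw [← Real.sqrt_mul (by positivity : (0:ℝ) ≤ 1 + 2 * K ^ 2)]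
    apply Real.sqrt_le_sqrt
    nlinarith [sq_nonneg (A - K * B), pow_le_pow_left₀ hAD0 htr 2, sq_nonneg B]
  · rcases le_total A (K ^ 2 / (K - 1) * B) with h1 | h1
    · -- B dominates
      have hs : A ^ 2 + B ^ 2 ≤ (1 + K ^ 4 / (K - 1) ^ 2) * B ^ 2 := by
        have h2 : A ^ 2 ≤ (K ^ 2 / (K - 1) * B) ^ 2 := pow_le_pow_left₀ hA0 h1 2
        have h3 : (K ^ 2 / (K - 1) * B) ^ 2 = K ^ 4 / (K - 1) ^ 2 * B ^ 2 := by
          field_simp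
        rw [h3] at h2
        nlinarith
      have hsK' : 0 < Real.sqrt (1 + K ^ 4 / (K - 1) ^ 2) := Real.sqrt_pos.mpr hK'0
      have hfin : (1 / Real.sqrt (1 + K ^ 4 / (K - 1) ^ 2)) * Real.sqrt (A ^ 2 + B ^ 2) ≤
          Real.sqrt (AD ^ 2 + B ^ 2) := by
        rw [div_mul_eq_mul_div, one_mul, div_le_iff₀ hsK',
          ← Real.sqrt_mul (by positivity)]
        apply Real.sqrt_le_sqrt
        calc A ^ 2 + B ^ 2 ≤ (1 + K ^ 4 / (K - 1) ^ 2) * B ^ 2 := hs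
          _ ≤ (AD ^ 2 + B ^ 2) * (1 + K ^ 4 / (K - 1) ^ 2) := by
              nlinarith [mul_nonneg (sq_nonneg AD) hK'0.le]
      calc min (1 / K) (1 / Real.sqrt (1 + K ^ 4 / (K - 1) ^ 2)) * Real.sqrt (A ^ 2 + B ^ 2)
          ≤ (1 / Real.sqrt (1 + K ^ 4 / (K - 1) ^ 2)) * Real.sqrt (A ^ 2 + B ^ 2) :=
            mul_le_mul_of_nonneg_right (min_le_right _ _) (Real.sqrt_nonneg _)
        _ ≤ _ := hfin
    · -- A dominates
      have h1' : K ^ 2 * B ≤ A * (K - 1) := by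
        rw [div_mul_eq_mul_div, div_le_iff₀ hKm1] at h1
        linarith
      have hADge : A / K ≤ AD := by
        have h2 : A / K ≤ A - K * B := by
          rw [div_le_iff₀ hK0]; nlinarith
        linarith
      have hfin : (1 / K) * Real.sqrt (A ^ 2 + B ^ 2) ≤ Real.sqrt (AD ^ 2 + B ^ 2) := by
        have e1 : (1 : ℝ) / K = Real.sqrt ((1 / K) ^ 2) := (Real.sqrt_sq (by positivity)).symm
        rw [e1, ← Real.sqrt_mul (by positivity)]
        apply Real.sqrt_le_sqrt
        have hsq : (A / K) ^ 2 ≤ AD ^ 2 := pow_le_pow_left₀ (by positivity) hADge 2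
        have e2 : (1 / K) ^ 2 * (A ^ 2 + B ^ 2) = (A / K) ^ 2 + (B / K) ^ 2 := by ring
        have hBK : (B / K) ^ 2 ≤ B ^ 2 := by
          rw [div_pow, div_le_iff₀ (by positivity)]
          nlinarith [sq_nonneg B]
        linarith [e2.le, e2.ge]
      calc min (1 / K) (1 / Real.sqrt (1 + K ^ 4 / (K - 1) ^ 2)) * Real.sqrt (A ^ 2 + B ^ 2)
          ≤ (1 / K) * Real.sqrt (A ^ 2 + B ^ 2) :=
            mul_le_mul_of_nonneg_right (min_le_left _ _) (Real.sqrt_nonneg _)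
        _ ≤ _ := hfin

/-- Claim in the proof of Proposition 5.4: if `φ : ℂ → ℂ` is `K`-bi-Lipschitz
(`K > 1`) with `φ(0) = 0`, then the shears `Φ_ε(z₁,z₂) = (z₁ − ε·φ(z₂), z₂)`, `ε ∈ [0,1]`,
are bijections and uniformly `K₀`-bi-Lipschitz for some `K₀ > 1` depending only on `K`;
explicitly one may take the upper constant `√(1+2K²)` and the lower constant
`min(1/K, 1/√K')` with `K' = 1 + K⁴/(K−1)²`. -/
theorem shear_family_biLipschitz (K : ℝ) (hK : 1 < K) (φ : ℂ → ℂ) (hφ0 : φ 0 = 0)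
    (hbil : ∀ a b : ℂ, (1 / K) * ‖(a - b)‖ ≤ ‖(φ a - φ b)‖ ∧
      ‖(φ a - φ b)‖ ≤ K * ‖(a - b)‖)
    (Φ : ℝ → ℂ × ℂ → ℂ × ℂ)
    (hΦ : ∀ ε : ℝ, ∀ p : ℂ × ℂ, Φ ε p = (p.1 - (ε : ℂ) * φ p.2, p.2)) :
    (∀ ε ∈ Set.Icc (0 : ℝ) 1, Function.Bijective (Φ ε)) ∧
    (∃ K₀ : ℝ, 1 < K₀ ∧ ∀ ε ∈ Set.Icc (0 : ℝ) 1, ∀ p q : ℂ × ℂ,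
      (1 / K₀) * eucNorm (p - q) ≤ eucNorm (Φ ε p - Φ ε q) ∧
      eucNorm (Φ ε p - Φ ε q) ≤ K₀ * eucNorm (p - q)) ∧
    (∀ ε ∈ Set.Icc (0 : ℝ) 1, ∀ p q : ℂ × ℂ,
      eucNorm (Φ ε p - Φ ε q) ≤ Real.sqrt (1 + 2 * K ^ 2) * eucNorm (p - q) ∧
      min (1 / K) (1 / Real.sqrt (1 + K ^ 4 / (K - 1) ^ 2)) * eucNorm (p - q) ≤
        eucNorm (Φ ε p - Φ ε q)) := by
  have hK0 : (0:ℝ) < K := lt_trans one_pos hK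
  have hK'0 : (0:ℝ) < 1 + K ^ 4 / (K - 1) ^ 2 := by
    have : (0:ℝ) < K - 1 := by linarith
    positivity
  -- bijectivity
  have hbij : ∀ ε ∈ Set.Icc (0 : ℝ) 1, Function.Bijective (Φ ε) := by
    intro ε _
    constructor
    · intro p q h
      rw [hΦ, hΦ, Prod.mk.injEq] at h
      obtain ⟨h1, h2⟩ := h
      rw [h2] at h1
      exact Prod.ext (sub_left_inj.mp h1) h2
    · intro y
      refine ⟨(y.1 + (ε : ℂ) * φ y.2, y.2), ?_⟩
      rw [hΦ]
      simp
  -- main explicit estimates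
  have main : ∀ ε ∈ Set.Icc (0 : ℝ) 1, ∀ p q : ℂ × ℂ,
      eucNorm (Φ ε p - Φ ε q) ≤ Real.sqrt (1 + 2 * K ^ 2) * eucNorm (p - q) ∧
      min (1 / K) (1 / Real.sqrt (1 + K ^ 4 / (K - 1) ^ 2)) * eucNorm (p - q) ≤
        eucNorm (Φ ε p - Φ ε q) := by
    rintro ε hε ⟨p1, p2⟩ ⟨q1, q2⟩
    have key : Φ ε (p1, p2) - Φ ε (q1, q2) =
        (p1 - q1 - (ε : ℂ) * (φ p2 - φ q2), p2 - q2) := by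
      rw [hΦ, hΦ, Prod.mk_sub_mk, Prod.mk.injEq]
      exact ⟨by ring, rfl⟩
    have tri : ∀ x y : ℂ, ‖x - y‖ ≤ ‖x‖ + ‖y‖ := fun x y => by
      simpa using norm_sub_le x y
    have tri2 : ∀ x y : ℂ, ‖x‖ - ‖y‖ ≤ ‖x - y‖ := fun x y => by
      simpa using norm_sub_norm_le x y
    have hd : ‖(ε : ℂ) * (φ p2 - φ q2)‖ ≤ K * ‖p2 - q2‖ := by
      rw [norm_mul]
      have h1 : ‖(ε : ℂ)‖ = ε := by
        rw [Complex.norm_real, Real.norm_eq_abs, abs_of_nonneg hε.1]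
      rw [h1]
      calc ε * ‖φ p2 - φ q2‖ ≤ 1 * (K * ‖p2 - q2‖) :=
            mul_le_mul hε.2 (hbil p2 q2).2 (norm_nonneg _) one_pos.le
        _ = K * ‖p2 - q2‖ := one_mul _
    have htr : ‖p1 - q1 - (ε : ℂ) * (φ p2 - φ q2)‖ ≤
        ‖p1 - q1‖ + K * ‖p2 - q2‖ := by
      have := tri (p1 - q1) ((ε : ℂ) * (φ p2 - φ q2))
      linarith
    have htr' : ‖p1 - q1‖ - K * ‖p2 - q2‖ ≤
        ‖p1 - q1 - (ε : ℂ) * (φ p2 - φ q2)‖ := by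
      have := tri2 (p1 - q1) ((ε : ℂ) * (φ p2 - φ q2))
      linarith
    obtain ⟨hu, hl⟩ := shear_real_bounds K (‖p1 - q1‖) (‖p2 - q2‖)
      (‖p1 - q1 - (ε : ℂ) * (φ p2 - φ q2)‖) hK (norm_nonneg _)
      (norm_nonneg _) (norm_nonneg _) htr htr'
    have e1 : eucNorm (Φ ε (p1, p2) - Φ ε (q1, q2)) =
        Real.sqrt (‖p1 - q1 - (ε : ℂ) * (φ p2 - φ q2)‖ ^ 2 +
          ‖p2 - q2‖ ^ 2) := by
      rw [key]; rfl
    have e2 : eucNorm ((p1, p2) - (q1, q2)) =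
        Real.sqrt (‖p1 - q1‖ ^ 2 + ‖p2 - q2‖ ^ 2) := rfl
    rw [e1, e2]
    exact ⟨hu, hl⟩
  refine ⟨hbij, ?_, main⟩
  -- existence of K₀
  set K₀ := max (Real.sqrt (1 + 2 * K ^ 2)) (max K (Real.sqrt (1 + K ^ 4 / (K - 1) ^ 2)))
    with hK₀def
  refine ⟨K₀, lt_max_of_lt_right (lt_max_of_lt_left hK), ?_⟩
  intro ε hε p q
  obtain ⟨hup, hlo⟩ := main ε hε p q
  constructor
  · have hmin : 1 / K₀ ≤ min (1 / K) (1 / Real.sqrt (1 + K ^ 4 / (K - 1) ^ 2)) := by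
      apply le_min
      · exact one_div_le_one_div_of_le hK0 (le_max_of_le_right (le_max_left _ _))
      · exact one_div_le_one_div_of_le (Real.sqrt_pos.mpr hK'0)
          (le_max_of_le_right (le_max_right _ _))
    calc 1 / K₀ * eucNorm (p - q)
        ≤ min (1 / K) (1 / Real.sqrt (1 + K ^ 4 / (K - 1) ^ 2)) * eucNorm (p - q) :=
          mul_le_mul_of_nonneg_right hmin (eucNorm_nonneg _)
      _ ≤ _ := hlo
  · calc eucNorm (Φ ε p - Φ ε q) ≤ Real.sqrt (1 + 2 * K ^ 2) * eucNorm (p - q) := hup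
      _ ≤ K₀ * eucNorm (p - q) :=
          mul_le_mul_of_nonneg_right (le_max_left _ _) (eucNorm_nonneg _)
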